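/- Consider in ℝ² a closed vertical strip V of width 2ε and an infinite strip S of width 2δ around a line making angle α ≠ 0 with the vertical direction, where 0 < ε < δ. Then the intersection V ∩ S contains a closed axis-parallel rectangle of width 2ε and height 2δ/sin|α| − 2ε/tan|α|, provided this quantity is positive. -/

import Mathlib

open Real

set_option maxHeartbeats 1000000

/-- The intersection of a closed vertical strip of width 2ε with a strip of
width 2δ around a line making angle α with the vertical contains a closed
axis-parallel rectangle of width 2ε and height 2δ/sin|α| − 2ε/tan|α|. -/
theorem stmt_4 (ε δ α x₀ : ℝ) (hε : 0 < ε) (hεδ : ε < δ)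
    (hα : 0 < |α|) (hα' : |α| < π / 2)
    (hpos : 0 < 2 * δ / Real.sin |α| - 2 * ε / Real.tan |α|) :
    ∃ y₀ : ℝ,
      {p : EuclideanSpace ℝ (Fin 2) |
          p 0 ∈ Set.Icc (x₀ - ε) (x₀ + ε) ∧
          p 1 ∈ Set.Icc y₀ (y₀ + (2 * δ / Real.sin |α| - 2 * ε / Real.tan |α|))}
        ⊆ {p : EuclideanSpace ℝ (Fin 2) | |p 0 - x₀| ≤ ε} ∩
          {p : EuclideanSpace ℝ (Fin 2) |
            Metric.infDist p
              {q : EuclideanSpace ℝ (Fin 2) |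
                ∃ t : ℝ, q = t • (WithLp.toLp 2 ![Real.sin α, Real.cos α] : EuclideanSpace ℝ (Fin 2))} ≤ δ} := by
  set s := Real.sin α with hs
  set c := Real.cos α with hcdef
  obtain ⟨hα1, hα2⟩ := abs_lt.mp hα'
  have hαne : α ≠ 0 := abs_pos.mp hα
  have hc : 0 < c := Real.cos_pos_of_mem_Ioo ⟨hα1, hα2⟩
  have hsne : s ≠ 0 := by
    intro h
    have hpi : (0:ℝ) < π := Real.pi_pos
    exact hαne (Real.sin_eq_zero_iff_of_lt_of_lt (by linarith) (by linarith) |>.mp h)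
  have habs : Real.sin |α| = |s| := by
    rcases abs_cases α with ⟨h1, h2⟩ | ⟨h1, h2⟩
    · rw [h1, abs_of_nonneg (Real.sin_nonneg_of_nonneg_of_le_pi h2 (by linarith [Real.pi_pos]))]
    · rw [h1, Real.sin_neg, abs_of_nonpos
        (Real.sin_nonpos_of_nonpos_of_neg_pi_le h2.le (by linarith [Real.pi_pos]))]
  have hcabs : Real.cos |α| = c := Real.cos_abs α
  have htan : Real.tan |α| = |s| / c := by
    rw [Real.tan_eq_sin_div_cos, habs, hcabs]
  have hsabs : 0 < |s| := abs_pos.mpr hsne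
  have heq : 2 * δ / Real.sin |α| - 2 * ε / Real.tan |α| = (2 * δ - 2 * ε * c) / |s| := by
    rw [habs, htan]
    field_simp
  have hδεc : ε * c < δ := by
    rw [heq] at hpos
    rcases div_pos_iff.mp hpos with ⟨h1, _⟩ | ⟨_, h2⟩
    · linarith
    · linarith [hsabs]
  refine ⟨x₀ * c / s + (ε * c - δ) / |s|, ?_⟩
  rintro p ⟨hp0, hp1⟩
  rw [heq] at hp1
  obtain ⟨hp0l, hp0u⟩ := hp0
  obtain ⟨hp1l, hp1u⟩ := hp1
  have hc0l : (x₀ - ε) * c ≤ p 0 * c := mul_le_mul_of_nonneg_right hp0l hc.le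
  have hc0u : p 0 * c ≤ (x₀ + ε) * c := mul_le_mul_of_nonneg_right hp0u hc.le
  have key : |p 0 * c - p 1 * s| ≤ δ := by
    rcases lt_or_gt_of_ne hsne with hneg | hposs
    · have habs' : |s| = -s := abs_of_neg hneg
      rw [habs'] at hp1l hp1u
      rw [abs_le]
      constructor
      · have h1 : p 1 * s ≤ (x₀ * c / s + (ε * c - δ) / (-s)) * s :=
          (mul_le_mul_right_of_neg hneg).mpr hp1l
        have h2 : (x₀ * c / s + (ε * c - δ) / (-s)) * s = x₀ * c - ε * c + δ := by
          field_simp [hsne]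
          ring
        nlinarith
      · have h1 : (x₀ * c / s + (ε * c - δ) / (-s) + (2 * δ - 2 * ε * c) / (-s)) * s ≤ p 1 * s :=
          (mul_le_mul_right_of_neg hneg).mpr hp1u
        have h2 : (x₀ * c / s + (ε * c - δ) / (-s) + (2 * δ - 2 * ε * c) / (-s)) * s
            = x₀ * c + ε * c - δ := by
          field_simp [hsne]
          ring
        nlinarith
    · have habs' : |s| = s := abs_of_pos hposs
      rw [habs'] at hp1l hp1u
      rw [abs_le]
      constructor
      · have h1 : p 1 * s ≤ (x₀ * c / s + (ε * c - δ) / s + (2 * δ - 2 * ε * c) / s) * s :=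
          mul_le_mul_of_nonneg_right hp1u hposs.le
        have h2 : (x₀ * c / s + (ε * c - δ) / s + (2 * δ - 2 * ε * c) / s) * s
            = x₀ * c - ε * c + δ := by
          field_simp [hsne]
          ring
        nlinarith
      · have h1 : (x₀ * c / s + (ε * c - δ) / s) * s ≤ p 1 * s :=
          mul_le_mul_of_nonneg_right hp1l hposs.le
        have h2 : (x₀ * c / s + (ε * c - δ) / s) * s = x₀ * c + ε * c - δ := by
          field_simp [hsne]
          ring
        nlinarith
  constructor
  · show |p 0 - x₀| ≤ ε
    rw [abs_le]
    exact ⟨by linarith, by linarith⟩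
  · show Metric.infDist p _ ≤ δ
    set t := p 0 * s + p 1 * c with ht
    have hqmem : (WithLp.toLp 2 ![t * s, t * c] : EuclideanSpace ℝ (Fin 2)) ∈
        {q : EuclideanSpace ℝ (Fin 2) |
          ∃ t : ℝ, q = t • (WithLp.toLp 2 ![Real.sin α, Real.cos α] : EuclideanSpace ℝ (Fin 2))} := by
      refine ⟨t, ?_⟩
      ext i
      fin_cases i <;> simp [← hs, ← hcdef]
    refine le_trans (Metric.infDist_le_dist_of_mem hqmem) ?_
    have hd : dist p (WithLp.toLp 2 ![t * s, t * c] : EuclideanSpace ℝ (Fin 2))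
        = Real.sqrt ((p 0 - t * s)^2 + (p 1 - t * c)^2) := by
      rw [EuclideanSpace.dist_eq, Fin.sum_univ_two]
      simp [Real.dist_eq, sq, abs_mul_abs_self]
    rw [hd, ht]
    have hsc : s^2 + c^2 = 1 := Real.sin_sq_add_cos_sq α
    have hiden : (p 0 - (p 0 * s + p 1 * c) * s)^2 + (p 1 - (p 0 * s + p 1 * c) * c)^2
        = (p 0 * c - p 1 * s)^2 := by
      linear_combination ((p 0 * s + p 1 * c)^2 - (p 0)^2 - (p 1)^2) * hsc
    rw [hiden, Real.sqrt_sq_eq_abs]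
    exact key
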